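/- Let d ≥ 5 and let λ be a partition of d that is not equal to any of the four partitions (d), (1^d), (d−1,1), (2,1^{d−2}). Then |f(λ)| < d(d−3)/2. -/

import Mathlib

lemma tm (n : ℕ) : 2 * n.choose 2 = n * (n - 1) := by
  cases n with
  | zero => simp
  | succ m =>
    rw [Nat.choose_two_right, Nat.succ_sub_one, Nat.mul_div_cancel']
    have : Even ((m+1) * m) := by rw [Nat.mul_comm]; exact Nat.even_mul_succ_self m
    exact this.two_dvd

lemma ch_add (a b : ℕ) : a.choose 2 + b.choose 2 ≤ (a + b).choose 2 := by
  have h1 := tm a; have h2 := tm b; have h3 := tm (a + b)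
  rcases Nat.eq_zero_or_pos a with ha | ha
  · simp [ha]
  rcases Nat.eq_zero_or_pos b with hb | hb
  · simp [hb]
  obtain ⟨a', rfl⟩ : ∃ a', a = a' + 1 := ⟨a - 1, by omega⟩
  obtain ⟨b', rfl⟩ : ∃ b', b = b' + 1 := ⟨b - 1, by omega⟩
  simp only [Nat.add_sub_cancel] at h1 h2
  have h4 : (a' + 1 + (b' + 1)) - 1 = a' + b' + 1 := by omega
  rw [h4] at h3
  nlinarith [h1, h2, h3]

lemma ms_sum (s : Multiset ℕ) : (s.map (fun p => p.choose 2)).sum ≤ s.sum.choose 2 := by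
  induction s using Multiset.induction with
  | empty => simp
  | cons a t ih =>
    simp only [Multiset.map_cons, Multiset.sum_cons]
    calc a.choose 2 + (t.map (fun p => p.choose 2)).sum ≤ a.choose 2 + t.sum.choose 2 := by omega
    _ ≤ (a + t.sum).choose 2 := ch_add _ _

lemma fs_sum (F : Finset ℕ) (g : ℕ → ℕ) :
    (∑ j ∈ F, (g j).choose 2) ≤ (∑ j ∈ F, g j).choose 2 := by
  classical
  induction F using Finset.induction_on with
  | empty => simp
  | insert a T hx ih =>
    rw [Finset.sum_insert hx, Finset.sum_insert hx]
    calc (g a).choose 2 + ∑ j ∈ T, (g j).choose 2 ≤ (g a).choose 2 + (∑ j ∈ T, g j).choose 2 := by omega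
    _ ≤ _ := ch_add _ _

lemma card_le_sum' (s : Multiset ℕ) (h : ∀ p ∈ s, 1 ≤ p) : Multiset.card s ≤ s.sum := by
  induction s using Multiset.induction with
  | empty => simp
  | cons a t ih =>
    simp only [Multiset.card_cons, Multiset.sum_cons]
    have := h a (Multiset.mem_cons_self a t)
    have := ih (fun p hp => h p (Multiset.mem_cons_of_mem hp))
    omega

lemma colsum (d : ℕ) (s : Multiset ℕ) (h : ∀ p ∈ s, p ≤ d) :
    ∑ j ∈ Finset.Icc 1 d, Multiset.card (s.filter (fun p => j ≤ p)) = s.sum := by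
  induction s using Multiset.induction with
  | empty => simp
  | cons a t ih =>
    have ha : a ≤ d := h a (Multiset.mem_cons_self a t)
    have ht := ih (fun p hp => h p (Multiset.mem_cons_of_mem hp))
    simp only [Multiset.filter_cons, Multiset.card_add, Multiset.sum_cons]
    rw [Finset.sum_add_distrib, ht]
    have : ∑ j ∈ Finset.Icc 1 d, Multiset.card (if j ≤ a then ({a} : Multiset ℕ) else 0) = a := by
      have e1 : ∀ j, Multiset.card (if j ≤ a then ({a} : Multiset ℕ) else 0)
          = if j ≤ a then 1 else 0 := by intro j; split_ifs <;> simp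
      simp only [e1]
      rw [Finset.sum_boole]
      have : Finset.filter (fun j => j ≤ a) (Finset.Icc 1 d) = Finset.Icc 1 a := by
        ext j; simp [Finset.mem_Icc, Finset.mem_filter]; omega
      simp [this, Nat.card_Icc]
    omega

lemma endpoint (x y : ℕ) : (x+2).choose 2 + (y+2).choose 2 ≤ (x+y+2).choose 2 + 1 := by
  have h1 : 2 * (x+2).choose 2 = (x+2)*(x+1) := by rw [tm]; congr 1
  have h2 : 2 * (y+2).choose 2 = (y+2)*(y+1) := by rw [tm]; congr 1
  have h3 : 2 * (x+y+2).choose 2 = (x+y+2)*(x+y+1) := by rw [tm]; congr 1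
  nlinarith [h1, h2, h3]

lemma sum_one_eq (t : Multiset ℕ) (hpos : ∀ p ∈ t, 1 ≤ p) (hsum : t.sum = 1) : t = {1} := by
  have hc := card_le_sum' t hpos
  rw [hsum] at hc
  have hc1 : Multiset.card t = 1 := by
    rcases Nat.eq_zero_or_pos (Multiset.card t) with h | h
    · rw [Multiset.card_eq_zero] at h; simp [h] at hsum
    · omega
  obtain ⟨x, rfl⟩ := Multiset.card_eq_one.mp hc1
  simp at hsum; simp [hsum]


/-- The value `f(λ) = ∑_i C(λ_i,2) − ∑_j C(λ'_j,2)` of the central character of `S(d)`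
associated to `λ ⊢ d` on the class of transpositions; here `λ'_j = #{i : λ_i ≥ j}`
is the conjugate partition (its parts vanish for `j > d`, so summing `j` over
`1,…,d` suffices). -/
def fTrans (d : ℕ) (lam : d.Partition) : ℤ :=
  (lam.parts.map (fun p => (p.choose 2 : ℤ))).sum -
    ∑ j ∈ Finset.Icc 1 d,
      ((Multiset.card (lam.parts.filter (fun p => j ≤ p))).choose 2 : ℤ)

/-- The one-part partition `(d)` of `d`. -/
def singlePart (d : ℕ) (hd : 1 ≤ d) : d.Partition :=
  ⟨{d}, by intro i hi; simp at hi; omega, by simp⟩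

/-- The partition `(1^d)` of `d`. -/
def allOnes (d : ℕ) : d.Partition :=
  ⟨Multiset.replicate d 1, by
      intro i hi; have := Multiset.eq_of_mem_replicate hi; omega,
    by simp⟩

/-- The partition `(d-1, 1)` of `d`. -/
def hook (d : ℕ) (hd : 2 ≤ d) : d.Partition :=
  ⟨(d - 1) ::ₘ {1}, by
      intro i hi
      rcases Multiset.mem_cons.mp hi with h | h
      · omega
      · simp at h; omega,
    by simp; omega⟩

/-- The partition `(2, 1^{d-2})` of `d`. -/
def twoOnes (d : ℕ) (hd : 2 ≤ d) : d.Partition :=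
  ⟨2 ::ₘ Multiset.replicate (d - 2) 1, by
      intro i hi
      rcases Multiset.mem_cons.mp hi with h | h
      · omega
      · have := Multiset.eq_of_mem_replicate h; omega,
    by simp [Multiset.sum_replicate]; omega⟩

/-- For `d ≥ 5` and `λ ⊢ d` different from `(d)`, `(1^d)`, `(d-1,1)`, `(2,1^{d-2})`,
we have `|f(λ)| < d(d-3)/2`. -/
theorem stmt_6 (d : ℕ) (hd : 5 ≤ d) (lam : d.Partition)
    (h1 : lam ≠ singlePart d (by omega))
    (h2 : lam ≠ allOnes d)
    (h3 : lam ≠ hook d (by omega))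
    (h4 : lam ≠ twoOnes d (by omega)) :
    |fTrans d lam| < (d : ℤ) * ((d : ℤ) - 3) / 2 := by
  obtain ⟨s, hpos, hsum⟩ := lam
  simp only [ne_eq, Nat.Partition.mk.injEq] at h1 h2 h3 h4 ⊢
  have hpos' : ∀ p ∈ s, 1 ≤ p := fun p hp => hpos hp
  have hled : ∀ p ∈ s, p ≤ d :=
    fun p hp => hsum ▸ Multiset.single_le_sum (fun x _ => Nat.zero_le x) p hp
  -- no part equals d
  have hnotd : ∀ p ∈ s, p ≠ d := by
    intro p hp hpd
    have e := Multiset.cons_erase hp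
    have hes : (s.erase p).sum = 0 := by
      have := congrArg Multiset.sum e
      rw [Multiset.sum_cons, hsum] at this; omega
    have ht0 : s.erase p = 0 := by
      by_contra h
      obtain ⟨x, hx⟩ := Multiset.exists_mem_of_ne_zero h
      have := hpos' x (Multiset.mem_of_mem_erase hx)
      have : x ≤ (s.erase p).sum :=
        Multiset.single_le_sum (fun x _ => Nat.zero_le x) x hx
      omega
    apply h1
    apply Nat.Partition.ext
    show s = {d}
    rw [← e, ht0, hpd]; rfl
  -- no part equals d - 1
  have hnotd1 : ∀ p ∈ s, p ≠ d - 1 := by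
    intro p hp hpd
    have e := Multiset.cons_erase hp
    have hes : (s.erase p).sum = 1 := by
      have := congrArg Multiset.sum e
      rw [Multiset.sum_cons, hsum] at this; omega
    have ht1 : s.erase p = {1} :=
      sum_one_eq _ (fun x hx => hpos' x (Multiset.mem_of_mem_erase hx)) hes
    apply h3
    apply Nat.Partition.ext
    show s = (d - 1) ::ₘ {1}
    rw [← e, ht1, hpd]
  -- some part is ≥ 2
  have hex : ∃ a ∈ s, 2 ≤ a := by
    by_contra h
    push_neg at h
    apply h2
    apply Nat.Partition.ext
    show s = Multiset.replicate d 1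
    have hall : ∀ b ∈ s, b = 1 := fun b hb => by
      have := hpos' b hb; have := h b hb; omega
    have hrep := Multiset.eq_replicate_card.mpr hall
    have hcard : Multiset.card s = d := by
      have := congrArg Multiset.sum hrep
      rw [hsum, Multiset.sum_replicate, smul_eq_mul, mul_one] at this
      omega
    rw [hrep, hcard]
  obtain ⟨a, ha, ha2⟩ := hex
  have had : a ≤ d - 2 := by
    have := hnotd a ha; have := hnotd1 a ha; have := hled a ha; omega
  -- bound on row sum P
  set P := (s.map fun p => p.choose 2).sum with hPdef
  have hP : P ≤ (d - 2).choose 2 + 1 := by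
    have e := Multiset.cons_erase ha
    have hes : (s.erase a).sum = d - a := by
      have := congrArg Multiset.sum e
      rw [Multiset.sum_cons, hsum] at this; omega
    have hsplit : a.choose 2 + ((s.erase a).map fun p => p.choose 2).sum = P := by
      have := congrArg (fun m => (Multiset.map (fun p => p.choose 2) m).sum) e
      simpa [Multiset.sum_cons] using this
    have hrest : ((s.erase a).map fun p => p.choose 2).sum ≤ (d - a).choose 2 := by
      have := ms_sum (s.erase a); rwa [hes] at this
    obtain ⟨x, hx⟩ : ∃ x, a = x + 2 := ⟨a - 2, by omega⟩
    obtain ⟨y, hy⟩ : ∃ y, d - a = y + 2 := ⟨d - a - 2, by omega⟩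
    have hxy : x + y + 2 = d - 2 := by omega
    have key : a.choose 2 + (d - a).choose 2 ≤ (d - 2).choose 2 + 1 := by
      calc a.choose 2 + (d - a).choose 2 = (x+2).choose 2 + (y+2).choose 2 := by rw [hy, hx]
      _ ≤ (x+y+2).choose 2 + 1 := endpoint x y
      _ = (d - 2).choose 2 + 1 := by rw [hxy]
    omega
  -- bound on column sum Q
  set b := Multiset.card s with hbdef
  have hbled : b ≤ d := hsum ▸ card_le_sum' s hpos'
  have hbne0 : b ≠ 0 := by
    intro h; rw [hbdef] at h; rw [Multiset.card_eq_zero] at h; simp [h] at hsum; omega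
  have hbne1 : b ≠ 1 := by
    intro h; rw [hbdef] at h
    obtain ⟨x, rfl⟩ := Multiset.card_eq_one.mp h
    simp at hsum
    exact hnotd x (by simp) hsum
  have hbned : b ≠ d := by
    intro h
    have e := Multiset.cons_erase ha
    have hcard : Multiset.card (s.erase a) = b - 1 := by
      have := congrArg Multiset.card e; simp at this; omega
    have := card_le_sum' (s.erase a) (fun x hx => hpos' x (Multiset.mem_of_mem_erase hx))
    have := congrArg Multiset.sum e
    rw [Multiset.sum_cons, hsum] at this
    omega
  have hbned1 : b ≠ d - 1 := by
    intro hb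
    have hle2 : ∀ p ∈ s, p ≤ 2 := by
      intro p hp
      have e := Multiset.cons_erase hp
      have hcard : Multiset.card (s.erase p) = b - 1 := by
        have := congrArg Multiset.card e; simp at this; omega
      have := card_le_sum' (s.erase p) (fun x hx => hpos' x (Multiset.mem_of_mem_erase hx))
      have := congrArg Multiset.sum e
      rw [Multiset.sum_cons, hsum] at this
      omega
    apply h4
    apply Nat.Partition.ext
    show s = 2 ::ₘ Multiset.replicate (d - 2) 1
    classical
    have hsplit := (Multiset.filter_add_not (fun x => x = 1) s).symm
    set u := s.filter (fun x => x = 1) with hu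
    set v := s.filter (fun x => ¬ x = 1) with hv
    have hu1 : u = Multiset.replicate (Multiset.card u) 1 :=
      Multiset.eq_replicate_card.mpr (fun x hx => by
        rw [hu] at hx; exact (Multiset.mem_filter.mp hx).2)
    have hv2 : v = Multiset.replicate (Multiset.card v) 2 :=
      Multiset.eq_replicate_card.mpr (fun x hx => by
        rw [hv] at hx
        have h1 := Multiset.mem_filter.mp hx
        have := hpos' x h1.1; have := hle2 x h1.1
        have := h1.2; omega)
    have hcardsum : Multiset.card u + Multiset.card v = b := by
      rw [hbdef, hsplit, Multiset.card_add]
    have hsums : Multiset.card u + 2 * Multiset.card v = d := by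
      have hss := congrArg Multiset.sum hsplit
      rw [hsum, Multiset.sum_add, hu1, hv2, Multiset.sum_replicate, Multiset.sum_replicate,
        smul_eq_mul, smul_eq_mul, mul_one] at hss
      omega
    have hcv : Multiset.card v = 1 := by omega
    have hcu : Multiset.card u = d - 2 := by omega
    rw [hsplit, hu1, hv2, hcv, hcu, Multiset.replicate_one, add_comm,
      Multiset.singleton_add]
  have hb2 : 2 ≤ b ∧ b ≤ d - 2 := by omega
  set g := fun j => Multiset.card (s.filter fun p => j ≤ p) with hgdef
  have hg1 : g 1 = b := by
    rw [hgdef]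
    simp only []
    rw [Multiset.filter_eq_self.mpr hpos']
  have hcol : ∑ j ∈ Finset.Icc 1 d, g j = d := by
    rw [hgdef]; rw [colsum d s hled, hsum]
  have hIcc : Finset.Icc 1 d = insert 1 (Finset.Icc 2 d) := by
    ext j; simp [Finset.mem_Icc, Finset.mem_insert]; omega
  have h1n : (1 : ℕ) ∉ Finset.Icc 2 d := by simp
  set Q := ∑ j ∈ Finset.Icc 1 d, (g j).choose 2 with hQdef
  have hQ : Q ≤ (d - 2).choose 2 + 1 := by
    rw [hQdef, hIcc, Finset.sum_insert h1n, hg1]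
    have hrest : ∑ j ∈ Finset.Icc 2 d, g j = d - b := by
      rw [hIcc, Finset.sum_insert h1n, hg1] at hcol; omega
    have hfs := fs_sum (Finset.Icc 2 d) g
    rw [hrest] at hfs
    obtain ⟨x, hx⟩ : ∃ x, b = x + 2 := ⟨b - 2, by omega⟩
    obtain ⟨y, hy⟩ : ∃ y, d - b = y + 2 := ⟨d - b - 2, by omega⟩
    have hxy : x + y + 2 = d - 2 := by omega
    have key : b.choose 2 + (d - b).choose 2 ≤ (d - 2).choose 2 + 1 := by
      calc b.choose 2 + (d - b).choose 2 = (x+2).choose 2 + (y+2).choose 2 := by rw [hy, hx]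
      _ ≤ (x+y+2).choose 2 + 1 := endpoint x y
      _ = (d - 2).choose 2 + 1 := by rw [hxy]
    omega
  -- assemble
  have hf : fTrans d ⟨s, hpos, hsum⟩ = (P : ℤ) - (Q : ℤ) := by
    unfold fTrans
    simp only []
    congr 1
    · rw [hPdef, Nat.cast_multiset_sum, Multiset.map_map]
      rfl
    · rw [hQdef, Nat.cast_sum]
  rw [hf]
  have hdvd : (2 : ℤ) ∣ (d : ℤ) * ((d : ℤ) - 3) := by
    rcases Int.even_or_odd (d : ℤ) with h | h
    · exact Dvd.dvd.mul_right h.two_dvd _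
    · have : Even ((d : ℤ) - 3) := by
        obtain ⟨k, hk⟩ := h; exact ⟨k - 1, by linarith⟩
      exact Dvd.dvd.mul_left this.two_dvd _
  have hM : 2 * ((d : ℤ) * ((d : ℤ) - 3) / 2) = (d : ℤ) * ((d : ℤ) - 3) :=
    Int.mul_ediv_cancel' hdvd
  have hcast : 2 * (((d - 2).choose 2 : ℕ) : ℤ) = ((d : ℤ) - 2) * ((d : ℤ) - 3) := by
    have h := tm (d - 2)
    rw [show d - 2 - 1 = d - 3 from by omega] at h
    have h2 : (2 : ℤ) * (((d - 2).choose 2 : ℕ) : ℤ) = (((d - 2) : ℕ) : ℤ) * (((d - 3) : ℕ) : ℤ) := by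
      exact_mod_cast h
    rw [Nat.cast_sub (show 2 ≤ d by omega), Nat.cast_sub (show 3 ≤ d by omega)] at h2
    push_cast at h2
    linarith
  have hPz : (P : ℤ) ≤ (((d - 2).choose 2 : ℕ) : ℤ) + 1 := by exact_mod_cast hP
  have hQz : (Q : ℤ) ≤ (((d - 2).choose 2 : ℕ) : ℤ) + 1 := by exact_mod_cast hQ
  have hPnn : (0 : ℤ) ≤ (P : ℤ) := Int.natCast_nonneg _
  have hQnn : (0 : ℤ) ≤ (Q : ℤ) := Int.natCast_nonneg _
  have hdz : (5 : ℤ) ≤ (d : ℤ) := by exact_mod_cast hd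
  rw [abs_sub_lt_iff]
  constructor <;> linarith
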